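/- Let φ : 𝔹_n → 𝔹_n be holomorphic with φ(0) = 0. Then sup{ ‖f∘φ‖_B : f Bloch on 𝔹_n, ‖f‖_B ≤ 1 } = 1; in particular, for every Bloch function f on 𝔹_n, f∘φ is Bloch and ‖f∘φ‖_B ≤ ‖f‖_B. -/

import Mathlib

open Complex Metric Set

/-- The Bergman metric on the unit ball `𝔹_n ⊆ ℂⁿ`:
`H_z(u,ū) = (n+1)[(1-‖z‖²)‖u‖² + |⟨u,z⟩|²] / (2(1-‖z‖²)²)`. -/
noncomputable def bergmanH (n : ℕ) (z u : EuclideanSpace ℂ (Fin n)) : ℝ :=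
  ((n + 1 : ℝ) * ((1 - ‖z‖ ^ 2) * ‖u‖ ^ 2 + ‖(inner ℂ z u : ℂ)‖ ^ 2)) /
    (2 * (1 - ‖z‖ ^ 2) ^ 2)

/-- `Q_f(z) = sup_{u ≠ 0} |f'(z)u| / H_z(u,ū)^{1/2}`. -/
noncomputable def Qball (n : ℕ) (f : EuclideanSpace ℂ (Fin n) → ℂ)
    (z : EuclideanSpace ℂ (Fin n)) : ℝ :=
  sSup {r : ℝ | ∃ u : EuclideanSpace ℂ (Fin n), u ≠ 0 ∧
    r = ‖fderiv ℂ f z u‖ / Real.sqrt (bergmanH n z u)}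

/-- The set of values `Q_f(z)` for `z ∈ 𝔹_n`. -/
def blochValuesBall (n : ℕ) (f : EuclideanSpace ℂ (Fin n) → ℂ) : Set ℝ :=
  {r : ℝ | ∃ z ∈ ball (0 : EuclideanSpace ℂ (Fin n)) 1, r = Qball n f z}

/-- The Bloch seminorm `β_f = sup_{z ∈ 𝔹_n} Q_f(z)`. -/
noncomputable def blochSemiBall (n : ℕ) (f : EuclideanSpace ℂ (Fin n) → ℂ) : ℝ :=
  sSup (blochValuesBall n f)

/-- `f` is a Bloch function on `𝔹_n`. -/
def IsBlochBall (n : ℕ) (f : EuclideanSpace ℂ (Fin n) → ℂ) : Prop :=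
  DifferentiableOn ℂ f (ball (0 : EuclideanSpace ℂ (Fin n)) 1) ∧
    BddAbove (blochValuesBall n f)

/-- The Bloch norm `‖f‖_B = |f(0)| + β_f`. -/
noncomputable def blochNormBall (n : ℕ) (f : EuclideanSpace ℂ (Fin n) → ℂ) : ℝ :=
  ‖f 0‖ + blochSemiBall n f

/-- The operator norm of the composition operator `C_φ` on the Bloch space of
`𝔹_n`: `‖C_φ‖ = sup { ‖f∘φ‖_B : f Bloch, ‖f‖_B ≤ 1 }`. -/
noncomputable def compOpNormBall (n : ℕ)
    (φ : EuclideanSpace ℂ (Fin n) → EuclideanSpace ℂ (Fin n)) : ℝ :=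
  sSup {r : ℝ | ∃ f : EuclideanSpace ℂ (Fin n) → ℂ,
    IsBlochBall n f ∧ blochNormBall n f ≤ 1 ∧ r = blochNormBall n (f ∘ φ)}


noncomputable section MobiusDev
variable {n : ℕ}
local notation "E" => EuclideanSpace ℂ (Fin n)

/-- `√(1-‖a‖²)`. -/
def mobS (a : E) : ℝ := Real.sqrt (1 - ‖a‖^2)

/-- Numerator of the Möbius automorphism `ψ_a` of the ball. -/
def mobF (a x : E) : E :=
  a - (mobS a : ℂ) • x - ((((1 - mobS a)/‖a‖^2 : ℝ) : ℂ) * inner ℂ a x) • a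

/-- The Möbius automorphism `ψ_a` of the unit ball. -/
def mob (a x : E) : E := ((1 : ℂ) - inner ℂ a x)⁻¹ • mobF a x

/-- Derivative of `mobF`. -/
def mobLF (a : E) : EuclideanSpace ℂ (Fin n) →L[ℂ] EuclideanSpace ℂ (Fin n) :=
  -((mobS a : ℂ) • ContinuousLinearMap.id ℂ (EuclideanSpace ℂ (Fin n))
    + ((((1 - mobS a)/‖a‖^2 : ℝ) : ℂ)) • (innerSL ℂ a).smulRight a)

/-- Derivative of `ψ_a` at `a`. -/
def mobDself (a : E) : EuclideanSpace ℂ (Fin n) →L[ℂ] EuclideanSpace ℂ (Fin n) :=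
  -(((mobS a : ℂ)⁻¹) • ContinuousLinearMap.id ℂ (EuclideanSpace ℂ (Fin n))
    + ((((1 - mobS a)/(‖a‖^2 * mobS a ^2) : ℝ) : ℂ)) • (innerSL ℂ a).smulRight a)

/-- Derivative of `ψ_a` at `0`. -/
def mobDzero (a : E) : EuclideanSpace ℂ (Fin n) →L[ℂ] EuclideanSpace ℂ (Fin n) :=
  -((mobS a : ℂ) • ContinuousLinearMap.id ℂ (EuclideanSpace ℂ (Fin n)))
    + (((mobS a * (1 - mobS a)/‖a‖^2 : ℝ) : ℂ)) • (innerSL ℂ a).smulRight a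

lemma mobS_sq {a : E} (ha : ‖a‖ < 1) : mobS a ^ 2 = 1 - ‖a‖^2 := by
  rw [mobS, Real.sq_sqrt]; nlinarith [norm_nonneg a]

lemma mobS_pos {a : E} (ha : ‖a‖ < 1) : 0 < mobS a := by
  rw [mobS]; apply Real.sqrt_pos.2; nlinarith [norm_nonneg a]

lemma mobS_zero : mobS (0 : E) = 1 := by simp [mobS]

lemma inner_self_c (a : E) : (inner ℂ a a : ℂ) = ((‖a‖^2 : ℝ) : ℂ) := by
  rw [inner_self_eq_norm_sq_to_K]; push_cast; rfl

lemma cnorm_sq (z : ℂ) : ‖z‖^2 = z.re^2 + z.im^2 := by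
  rw [Complex.sq_norm, Complex.normSq_apply]; ring

lemma norm_sq_expand (α β : ℂ) (x y : E) :
    ‖α•x + β•y‖^2 = ‖α‖^2*‖x‖^2 + 2*(((starRingEnd ℂ) α * β * inner ℂ x y).re) + ‖β‖^2*‖y‖^2 := by
  rw [norm_add_sq (𝕜 := ℂ)]
  simp [norm_smul, inner_smul_left, inner_smul_right, RCLike.re_to_complex]
  ring

lemma mob_zero_right (a : E) : mob a 0 = a := by simp [mob, mobF]

lemma mob_zero_left (x : E) : mob (0 : E) x = -x := by simp [mob, mobF, mobS]

lemma mobF_self {a : E} (ha : ‖a‖ < 1) : mobF a a = 0 := by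
  rcases eq_or_ne a 0 with rfl | h
  · simp [mobF]
  · have hA : ((‖a‖ : ℂ)) ≠ 0 := by simpa using h
    rw [mobF, inner_self_c]
    match_scalars
    push_cast
    rw [div_mul_cancel₀ _ (pow_ne_zero 2 hA)]
    ring

lemma mob_self {a : E} (ha : ‖a‖ < 1) : mob a a = 0 := by
  rw [mob, mobF_self ha, smul_zero]

lemma sub_inner_ne_zero {a x : E} (ha : ‖a‖ < 1) (hx : ‖x‖ ≤ 1) :
    (1 : ℂ) - inner ℂ a x ≠ 0 := by
  intro h
  have h2 : (inner ℂ a x : ℂ) = 1 := by linear_combination -h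
  have h3 := norm_inner_le_norm (𝕜 := ℂ) a x
  rw [h2] at h3
  simp only [norm_one] at h3
  nlinarith [norm_nonneg a, norm_nonneg x]

lemma norm_mobF_key {a x : E} (ha : ‖a‖ < 1) :
    ‖(1:ℂ) - inner ℂ a x‖^2 - ‖mobF a x‖^2 = (1 - ‖a‖^2) * (1 - ‖x‖^2) := by
  rcases eq_or_ne a 0 with rfl | h
  · simp [mobF, mobS]
  · have hA : ‖a‖ ≠ 0 := by simpa using h
    have hs : mobS a ^ 2 = 1 - ‖a‖^2 := mobS_sq ha
    have hrw : mobF a x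
        = (1 - (((1 - mobS a)/‖a‖^2 : ℝ):ℂ) * inner ℂ a x) • a + (-(mobS a:ℂ)) • x := by
      rw [mobF]; module
    rw [hrw, norm_sq_expand]
    have hA2 : ‖a‖^2 = 1 - mobS a^2 := by linarith
    simp only [cnorm_sq, Complex.sub_re, Complex.sub_im, Complex.mul_re, Complex.mul_im,
      Complex.one_re, Complex.one_im, Complex.ofReal_re, Complex.ofReal_im,
      Complex.neg_re, Complex.neg_im, Complex.conj_re, Complex.conj_im, map_sub, map_mul, map_one]
    rw [hA2]
    have hne : (1:ℝ) - mobS a^2 ≠ 0 := by rw [← hA2]; positivity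
    field_simp
    ring

lemma one_sub_norm_mob_sq {a x : E} (ha : ‖a‖ < 1) (hx : ‖x‖ ≤ 1) :
    1 - ‖mob a x‖^2 = (1 - ‖a‖^2) * (1 - ‖x‖^2) / ‖(1:ℂ) - inner ℂ a x‖^2 := by
  have h1 := sub_inner_ne_zero ha hx
  have hn : ‖(1:ℂ) - inner ℂ a x‖ ≠ 0 := norm_ne_zero_iff.2 h1
  have h2 : ‖mob a x‖^2 = ‖mobF a x‖^2 / ‖(1:ℂ) - inner ℂ a x‖^2 := by
    rw [mob, norm_smul, norm_inv, mul_pow, div_eq_mul_inv, ← inv_pow]; ring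
  rw [h2, eq_div_iff (by positivity), sub_mul, div_mul_cancel₀ _ (by positivity),
    ← norm_mobF_key ha]
  ring

lemma mob_mem_ball {a x : E} (ha : ‖a‖ < 1) (hx : ‖x‖ < 1) : ‖mob a x‖ < 1 := by
  have h1 := sub_inner_ne_zero ha hx.le
  have hpos : (0:ℝ) < (1 - ‖a‖^2) * (1 - ‖x‖^2) / ‖(1:ℂ) - inner ℂ a x‖^2 := by
    have h0 : (0:ℝ) < ‖(1:ℂ) - inner ℂ a x‖ := norm_pos_iff.2 h1
    have h2 : (0:ℝ) < 1 - ‖a‖^2 := by nlinarith [norm_nonneg a]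
    have h3 : (0:ℝ) < 1 - ‖x‖^2 := by nlinarith [norm_nonneg x]
    positivity
  have h4 := one_sub_norm_mob_sq ha hx.le
  nlinarith [norm_nonneg (mob a x)]

lemma mobLF_apply (a u : E) :
    mobLF a u = -((mobS a : ℂ) • u + ((((1 - mobS a)/‖a‖^2 : ℝ) : ℂ) * inner ℂ a u) • a) := by
  simp [mobLF, smul_smul]

lemma mobDself_apply (a u : E) :
    mobDself a u = -(((mobS a : ℂ)⁻¹) • u
      + ((((1 - mobS a)/(‖a‖^2 * mobS a ^2) : ℝ) : ℂ) * inner ℂ a u) • a) := by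
  simp [mobDself, smul_smul]

lemma mobDzero_apply (a u : E) :
    mobDzero a u = -((mobS a : ℂ) • u)
      + (((mobS a * (1 - mobS a)/‖a‖^2 : ℝ) : ℂ) * inner ℂ a u) • a := by
  simp [mobDzero, smul_smul]

lemma mobDzero_mobDself {a : E} (ha : ‖a‖ < 1) (u : E) :
    mobDzero a (mobDself a u) = u := by
  rcases eq_or_ne a 0 with rfl | h
  · simp [mobDzero_apply, mobDself_apply, mobS]
  · have hA : ‖a‖ ≠ 0 := by simpa using h
    have hs2 : mobS a ^ 2 = 1 - ‖a‖^2 := mobS_sq ha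
    have hspos : 0 < mobS a := mobS_pos ha
    rw [mobDself_apply, mobDzero_apply]
    simp only [inner_neg_right, inner_add_right, inner_smul_right, inner_self_c]
    have hAc : ((‖a‖:ℝ):ℂ) ≠ 0 := by simpa using hA
    have hsc0 : ((mobS a : ℂ)) ≠ 0 := by simpa using hspos.ne'
    match_scalars
    · field_simp
    · field_simp [hAc, hsc0]
      ring_nf

lemma norm_mobDself_sq {a : E} (ha : ‖a‖ < 1) (u : E) :
    ‖mobDself a u‖^2
      = ((1 - ‖a‖^2) * ‖u‖^2 + ‖(inner ℂ a u : ℂ)‖^2) / (1 - ‖a‖^2)^2 := by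
  rcases eq_or_ne a 0 with rfl | h
  · simp [mobDself_apply, mobS_zero]
  · have hA : ‖a‖ ≠ 0 := by simpa using h
    have hs2 : mobS a ^ 2 = 1 - ‖a‖^2 := mobS_sq ha
    have hspos : 0 < mobS a := mobS_pos ha
    have hrw : mobDself a u = (-(mobS a : ℂ)⁻¹) • u
        + (-((((1 - mobS a)/(‖a‖^2 * mobS a ^2) : ℝ) : ℂ) * inner ℂ a u)) • a := by
      rw [mobDself_apply]; module
    rw [hrw, norm_sq_expand]
    rw [show (inner ℂ u a : ℂ) = (starRingEnd ℂ) (inner ℂ a u) from (inner_conj_symm u a).symm]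
    have hA2 : ‖a‖^2 = 1 - mobS a^2 := by linarith
    simp only [cnorm_sq, Complex.sub_re, Complex.sub_im, Complex.mul_re, Complex.mul_im,
      Complex.one_re, Complex.one_im, Complex.ofReal_re, Complex.ofReal_im,
      Complex.neg_re, Complex.neg_im, Complex.conj_re, Complex.conj_im, map_neg, map_mul,
      map_inv₀, Complex.inv_re, Complex.inv_im, Complex.conj_ofReal, Complex.normSq_ofReal]
    rw [hA2]
    have hne : (1:ℝ) - mobS a^2 ≠ 0 := by rw [← hA2]; positivity
    field_simp
    ring

lemma hasFDerivAt_mobF (a x₀ : E) : HasFDerivAt (mobF a) (mobLF a) x₀ := by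
  have h := (((mobS a : ℂ) • ContinuousLinearMap.id ℂ (EuclideanSpace ℂ (Fin n))
    + ((((1 - mobS a)/‖a‖^2 : ℝ) : ℂ)) • (innerSL ℂ a).smulRight a).hasFDerivAt
      (x := x₀)).const_sub a
  have heq : (fun x => a - ((mobS a : ℂ) • ContinuousLinearMap.id ℂ (EuclideanSpace ℂ (Fin n))
      + ((((1 - mobS a)/‖a‖^2 : ℝ) : ℂ)) • (innerSL ℂ a).smulRight a) x) = mobF a := by
    funext x
    simp [mobF, smul_smul]
    module
  rw [heq] at h
  exact h

lemma hasFDerivAt_inner (a x₀ : E) :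
    HasFDerivAt (fun x : E => (1 : ℂ) - inner ℂ a x) (-(innerSL ℂ a : E →L[ℂ] ℂ)) x₀ :=
  ((innerSL ℂ a).hasFDerivAt).const_sub 1

lemma hasFDerivAt_mob (a : E) (x₀ : E) (h1 : (1:ℂ) - inner ℂ a x₀ ≠ 0) :
    HasFDerivAt (mob a)
      (((1:ℂ) - inner ℂ a x₀)⁻¹ • mobLF a
        + ((-(((1:ℂ) - inner ℂ a x₀) ^ 2)⁻¹) • -(innerSL ℂ a : E →L[ℂ] ℂ)).smulRight
            (mobF a x₀)) x₀ :=
  ((hasDerivAt_inv h1).comp_hasFDerivAt x₀ (hasFDerivAt_inner a x₀)).smul (hasFDerivAt_mobF a x₀)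

end MobiusDev
set_option synthInstance.maxHeartbeats 1000000
set_option maxHeartbeats 1000000
noncomputable section MobiusDev2
variable {n : ℕ}
local notation "E" => EuclideanSpace ℂ (Fin n)

lemma mobF_zero_right (a : E) : mobF a 0 = a := by simp [mobF]

lemma hasFDerivAt_mob_self {a : E} (ha : ‖a‖ < 1) :
    HasFDerivAt (mob a) (mobDself a) a := by
  have h1 : (1:ℂ) - inner ℂ a a ≠ 0 := sub_inner_ne_zero ha ha.le
  have H := hasFDerivAt_mob a a h1
  rw [mobF_self ha] at H
  have heq : (((1:ℂ) - inner ℂ a a)⁻¹ • mobLF a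
      + ((-(((1:ℂ) - inner ℂ a a) ^ 2)⁻¹) • -(innerSL ℂ a : E →L[ℂ] ℂ)).smulRight (0 : E))
      = mobDself a := by
    apply ContinuousLinearMap.ext
    intro u
    rcases eq_or_ne a 0 with rfl | h
    · simp [mobLF_apply, mobDself_apply, mobS_zero]
    · have hA : ‖a‖ ≠ 0 := by simpa using h
      have hAc : ((‖a‖:ℝ):ℂ) ≠ 0 := by simpa using hA
      have hs2 : mobS a ^ 2 = 1 - ‖a‖^2 := mobS_sq ha
      have hspos : 0 < mobS a := mobS_pos ha
      have hsc0 : ((mobS a : ℂ)) ≠ 0 := by simpa using hspos.ne'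
      have hsc : ((mobS a : ℂ))^2 = 1 - ((‖a‖:ℝ) : ℂ)^2 := by
        rw [show ((‖a‖:ℝ):ℂ)^2 = ((‖a‖^2 : ℝ) : ℂ) by push_cast; ring,
          show ((mobS a:ℂ))^2 = ((mobS a^2:ℝ):ℂ) by push_cast; ring, hs2]
        push_cast; ring
      simp only [ContinuousLinearMap.add_apply, ContinuousLinearMap.smul_apply,
        ContinuousLinearMap.smulRight_apply, smul_zero, add_zero, mobLF_apply,
        mobDself_apply, inner_self_c]
      have h1c : (1:ℂ) - ((‖a‖^2:ℝ):ℂ) = ((mobS a : ℂ))^2 := by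
        rw [hsc]; push_cast; ring
      rw [h1c]
      match_scalars
      · field_simp
        try ring
      · field_simp [hAc, hsc0]
        try ring_nf
        try exact Or.inl trivial
  rw [heq] at H
  exact H

lemma hasFDerivAt_mob_zero {a : E} (ha : ‖a‖ < 1) :
    HasFDerivAt (mob a) (mobDzero a) 0 := by
  have h1 : (1:ℂ) - inner ℂ a (0:E) ≠ 0 := by simp
  have H := hasFDerivAt_mob a 0 h1
  rw [mobF_zero_right] at H
  have heq : (((1:ℂ) - inner ℂ a (0:E))⁻¹ • mobLF a
      + ((-(((1:ℂ) - inner ℂ a (0:E)) ^ 2)⁻¹) • -(innerSL ℂ a : E →L[ℂ] ℂ)).smulRight a)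
      = mobDzero a := by
    apply ContinuousLinearMap.ext
    intro u
    rcases eq_or_ne a 0 with rfl | h
    · simp [mobLF_apply, mobDzero_apply, mobS_zero]
    · have hA : ‖a‖ ≠ 0 := by simpa using h
      have hAc : ((‖a‖:ℝ):ℂ) ≠ 0 := by simpa using hA
      have hs2 : mobS a ^ 2 = 1 - ‖a‖^2 := mobS_sq ha
      have hspos : 0 < mobS a := mobS_pos ha
      have hsc0 : ((mobS a : ℂ)) ≠ 0 := by simpa using hspos.ne'
      have hsc : ((mobS a : ℂ))^2 = 1 - ((‖a‖:ℝ) : ℂ)^2 := by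
        rw [show ((‖a‖:ℝ):ℂ)^2 = ((‖a‖^2 : ℝ) : ℂ) by push_cast; ring,
          show ((mobS a:ℂ))^2 = ((mobS a^2:ℝ):ℂ) by push_cast; ring, hs2]
        push_cast; ring
      simp only [ContinuousLinearMap.add_apply, ContinuousLinearMap.smul_apply,
        ContinuousLinearMap.smulRight_apply, mobLF_apply, mobDzero_apply,
        inner_zero_right, ContinuousLinearMap.neg_apply, innerSL_apply_apply]
      match_scalars
      · push_cast
        field_simp
        try ring
      · push_cast
        field_simp [hAc, hsc0]
        try ring_nf
        linear_combination (inner ℂ a u) * hsc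
  rw [heq] at H
  exact H

end MobiusDev2

noncomputable section SchwarzPick
variable {n : ℕ}
local notation "E" => EuclideanSpace ℂ (Fin n)

lemma differentiableAt_mob (a : E) (x : E) (h1 : (1:ℂ) - inner ℂ a x ≠ 0) :
    DifferentiableAt ℂ (mob a) x :=
  (hasFDerivAt_mob a x h1).differentiableAt

/-- Several-variable Schwarz lemma at the origin. -/
lemma schwarz_ball {Φ : E → E} (hd : DifferentiableOn ℂ Φ (ball 0 1))
    (hm : MapsTo Φ (ball 0 1) (ball 0 1)) (h0 : Φ 0 = 0) (ξ : E) :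
    ‖fderiv ℂ Φ 0 ξ‖ ≤ ‖ξ‖ := by
  rcases eq_or_ne ξ 0 with rfl | hξ
  · simp
  have hξn : ‖ξ‖ ≠ 0 := norm_ne_zero_iff.2 hξ
  set ξ' : E := ((‖ξ‖ : ℂ))⁻¹ • ξ with hξ'def
  have hξ'1 : ‖ξ'‖ = 1 := by
    rw [hξ'def, norm_smul, norm_inv, Complex.norm_real, Real.norm_eq_abs, abs_norm]
    field_simp
  have hmem : ∀ lam : ℂ, lam ∈ ball (0:ℂ) 1 → lam • ξ' ∈ ball (0:E) 1 := by
    intro lam h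
    rw [mem_ball_zero_iff] at h ⊢
    rw [norm_smul, hξ'1, mul_one]
    exact h
  set g : ℂ → E := fun lam => Φ (lam • ξ') with hgdef
  have hgd : DifferentiableOn ℂ g (ball 0 1) := by
    intro lam hlam
    have h1 : DifferentiableAt ℂ (fun l : ℂ => l • ξ') lam :=
      (differentiableAt_id).smul_const ξ'
    exact ((hd.differentiableAt (isOpen_ball.mem_nhds (hmem _ hlam))).comp lam
      h1).differentiableWithinAt
  have hg0 : g 0 = 0 := by simp [hgdef, h0]
  have hgm : MapsTo g (ball 0 1) (ball (g 0) 1) := by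
    rw [hg0]
    intro lam h
    exact hm (hmem _ h)
  have hT : HasFDerivAt Φ (fderiv ℂ Φ 0) 0 :=
    (hd.differentiableAt (isOpen_ball.mem_nhds (mem_ball_self one_pos))).hasFDerivAt
  have hsm : HasDerivAt (fun l : ℂ => l • ξ') ξ' 0 := by
    simpa using (hasDerivAt_id (0:ℂ)).smul_const ξ'
  have hT' : HasFDerivAt Φ (fderiv ℂ Φ 0) ((0:ℂ) • ξ') := by rwa [zero_smul]
  have hgderiv : HasDerivAt g (fderiv ℂ Φ 0 ξ') 0 := hT'.comp_hasDerivAt 0 hsm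
  have hle := Complex.norm_deriv_le_div_of_mapsTo_ball hgd (hgm.mono_right ball_subset_closedBall) one_pos
  rw [hgderiv.deriv] at hle
  have hTξ : fderiv ℂ Φ 0 ξ = (‖ξ‖ : ℂ) • fderiv ℂ Φ 0 ξ' := by
    rw [← (fderiv ℂ Φ 0).map_smul, hξ'def, smul_smul]
    congr 1
    rw [mul_inv_cancel₀ (by simpa using hξn), one_smul]
  calc ‖fderiv ℂ Φ 0 ξ‖ = ‖ξ‖ * ‖fderiv ℂ Φ 0 ξ'‖ := by
        rw [hTξ, norm_smul, Complex.norm_real, Real.norm_eq_abs, abs_norm]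
    _ ≤ ‖ξ‖ * 1 := by
        apply mul_le_mul_of_nonneg_left _ (norm_nonneg ξ)
        simpa using hle
    _ = ‖ξ‖ := mul_one _

lemma bergmanH_eq (z u : E) : bergmanH n z u
    = (((n:ℝ)+1)/2) * (((1 - ‖z‖^2) * ‖u‖^2 + ‖(inner ℂ z u : ℂ)‖^2)/(1 - ‖z‖^2)^2) := by
  rw [bergmanH, div_mul_div_comm]

/-- The Schwarz–Pick lemma for the Bergman metric of the unit ball. -/
lemma schwarz_pick {φ : EuclideanSpace ℂ (Fin n) → EuclideanSpace ℂ (Fin n)}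
    (hmap : MapsTo φ (ball (0 : EuclideanSpace ℂ (Fin n)) 1) (ball 0 1))
    (hφ : DifferentiableOn ℂ φ (ball (0 : EuclideanSpace ℂ (Fin n)) 1))
    {z : E} (hz : ‖z‖ < 1) (u : E) :
    bergmanH n (φ z) (fderiv ℂ φ z u) ≤ bergmanH n z u := by
  have hzball : z ∈ ball (0:E) 1 := mem_ball_zero_iff.2 hz
  have hw : ‖φ z‖ < 1 := mem_ball_zero_iff.1 (hmap hzball)
  set w := φ z with hwdef
  set Φ : E → E := (mob w) ∘ φ ∘ (mob z) with hΦdef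
  have hΦd : DifferentiableOn ℂ Φ (ball 0 1) := by
    intro x hx
    have hx' : ‖x‖ < 1 := mem_ball_zero_iff.1 hx
    have h1 : DifferentiableAt ℂ (mob z) x :=
      differentiableAt_mob z x (sub_inner_ne_zero hz hx'.le)
    have hψx : ‖mob z x‖ < 1 := mob_mem_ball hz hx'
    have h2 : DifferentiableAt ℂ φ (mob z x) :=
      hφ.differentiableAt (isOpen_ball.mem_nhds (mem_ball_zero_iff.2 hψx))
    have hφψx : ‖φ (mob z x)‖ < 1 :=
      mem_ball_zero_iff.1 (hmap (mem_ball_zero_iff.2 hψx))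
    have h3 : DifferentiableAt ℂ (mob w) (φ (mob z x)) :=
      differentiableAt_mob w _ (sub_inner_ne_zero hw hφψx.le)
    exact ((h3.comp _ h2).comp x h1).differentiableWithinAt
  have hΦm : MapsTo Φ (ball 0 1) (ball 0 1) := by
    intro x hx
    have hx' : ‖x‖ < 1 := mem_ball_zero_iff.1 hx
    have hψx : ‖mob z x‖ < 1 := mob_mem_ball hz hx'
    have hφψx : ‖φ (mob z x)‖ < 1 :=
      mem_ball_zero_iff.1 (hmap (mem_ball_zero_iff.2 hψx))
    exact mem_ball_zero_iff.2 (mob_mem_ball hw hφψx)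
  have hΦ0 : Φ 0 = 0 := by
    simp only [hΦdef, Function.comp_apply, mob_zero_right]
    rw [← hwdef, mob_self hw]
  have hψ0 : HasFDerivAt (mob z) (mobDzero z) 0 := hasFDerivAt_mob_zero hz
  have hφz : HasFDerivAt φ (fderiv ℂ φ z) (mob z 0) := by
    rw [mob_zero_right]
    exact (hφ.differentiableAt (isOpen_ball.mem_nhds hzball)).hasFDerivAt
  have hχw : HasFDerivAt (mob w) (mobDself w) ((φ ∘ mob z) 0) := by
    rw [Function.comp_apply, mob_zero_right, ← hwdef]
    exact hasFDerivAt_mob_self hw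
  have hΦderiv : HasFDerivAt Φ
      ((mobDself w).comp ((fderiv ℂ φ z).comp (mobDzero z))) 0 :=
    hχw.comp 0 (hφz.comp 0 hψ0)
  have hfd := hΦderiv.fderiv
  have key := schwarz_ball hΦd hΦm hΦ0 (mobDself z u)
  rw [hfd] at key
  have hval : ((mobDself w).comp ((fderiv ℂ φ z).comp (mobDzero z))) (mobDself z u)
      = mobDself w (fderiv ℂ φ z u) := by
    simp only [ContinuousLinearMap.comp_apply]
    rw [mobDzero_mobDself hz u]
  rw [hval] at key
  have key2 : ‖mobDself w (fderiv ℂ φ z u)‖^2 ≤ ‖mobDself z u‖^2 := by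
    apply pow_le_pow_left₀ (norm_nonneg _) key
  rw [norm_mobDself_sq hw, norm_mobDself_sq hz] at key2
  rw [bergmanH_eq, bergmanH_eq]
  apply mul_le_mul_of_nonneg_left key2
  positivity

end SchwarzPick


noncomputable section Bookkeeping
variable {n : ℕ}
local notation "E" => EuclideanSpace ℂ (Fin n)

lemma Qball_nonneg (f : E → ℂ) (z : E) : 0 ≤ Qball n f z := by
  apply Real.sSup_nonneg
  rintro r ⟨u, hu, rfl⟩
  positivity

lemma blochSemiBall_nonneg (f : E → ℂ) : 0 ≤ blochSemiBall n f := by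
  apply Real.sSup_nonneg
  rintro r ⟨z, hz, rfl⟩
  exact Qball_nonneg f z

lemma bergmanH_pos {z : E} (hz : ‖z‖ < 1) {u : E} (hu : u ≠ 0) :
    0 < bergmanH n z u := by
  have h1 : (0:ℝ) < 1 - ‖z‖^2 := by nlinarith [norm_nonneg z]
  have h2 : (0:ℝ) < ‖u‖ := norm_pos_iff.2 hu
  rw [bergmanH]
  apply div_pos
  · have h3 : (0:ℝ) ≤ ‖(inner ℂ z u : ℂ)‖^2 := sq_nonneg _
    have h4 : (0:ℝ) < ((n:ℝ)+1) := by positivity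
    have h5 : (0:ℝ) < (1 - ‖z‖^2) * ‖u‖^2 := by positivity
    exact mul_pos h4 (by nlinarith)
  · positivity

lemma sqrt_bergmanH_ge {z : E} (hz : ‖z‖ < 1) (u : E) :
    Real.sqrt (((n:ℝ)+1)/(2*(1 - ‖z‖^2))) * ‖u‖ ≤ Real.sqrt (bergmanH n z u) := by
  have h1 : (0:ℝ) < 1 - ‖z‖^2 := by nlinarith [norm_nonneg z]
  have hk : (0:ℝ) ≤ ((n:ℝ)+1)/(2*(1 - ‖z‖^2)) := by positivity
  have hle : ((n:ℝ)+1)/(2*(1 - ‖z‖^2)) * ‖u‖^2 ≤ bergmanH n z u := by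
    rw [bergmanH]
    have heq : ((n:ℝ)+1)/(2*(1 - ‖z‖^2)) * ‖u‖^2
        = ((n:ℝ)+1) * ((1 - ‖z‖^2) * ‖u‖^2) / (2*(1 - ‖z‖^2)^2) := by
      field_simp
    rw [heq]
    apply div_le_div_of_nonneg_right ?_ (by positivity)
    · nlinarith [sq_nonneg ‖(inner ℂ z u : ℂ)‖, Nat.cast_nonneg (α := ℝ) n]
  calc Real.sqrt (((n:ℝ)+1)/(2*(1 - ‖z‖^2))) * ‖u‖
      = Real.sqrt (((n:ℝ)+1)/(2*(1 - ‖z‖^2)) * ‖u‖^2) := by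
        rw [Real.sqrt_mul hk, Real.sqrt_sq (norm_nonneg u)]
    _ ≤ Real.sqrt (bergmanH n z u) := Real.sqrt_le_sqrt hle

lemma Qball_set_bddAbove {f : E → ℂ} {z : E} (hz : ‖z‖ < 1)
    (hf : DifferentiableAt ℂ f z) :
    BddAbove {r : ℝ | ∃ u : E, u ≠ 0 ∧
      r = ‖fderiv ℂ f z u‖ / Real.sqrt (bergmanH n z u)} := by
  have h1 : (0:ℝ) < 1 - ‖z‖^2 := by nlinarith [norm_nonneg z]
  have hkpos : (0:ℝ) < Real.sqrt (((n:ℝ)+1)/(2*(1 - ‖z‖^2))) := by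
    apply Real.sqrt_pos.2
    positivity
  refine ⟨‖fderiv ℂ f z‖ / Real.sqrt (((n:ℝ)+1)/(2*(1 - ‖z‖^2))), ?_⟩
  rintro r ⟨u, hu, rfl⟩
  have hun : (0:ℝ) < ‖u‖ := norm_pos_iff.2 hu
  have hge := sqrt_bergmanH_ge hz (n := n) u
  calc ‖fderiv ℂ f z u‖ / Real.sqrt (bergmanH n z u)
      ≤ (‖fderiv ℂ f z‖ * ‖u‖) / (Real.sqrt (((n:ℝ)+1)/(2*(1 - ‖z‖^2))) * ‖u‖) := by
        exact div_le_div₀ (by positivity) ((fderiv ℂ f z).le_opNorm u)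
          (by positivity) hge
    _ = ‖fderiv ℂ f z‖ / Real.sqrt (((n:ℝ)+1)/(2*(1 - ‖z‖^2))) := by
        rw [mul_div_mul_right _ _ hun.ne']

lemma Qball_le_of_mem {f : E → ℂ} {z : E} (hz : ‖z‖ < 1)
    (hf : DifferentiableAt ℂ f z) {u : E} (hu : u ≠ 0) :
    ‖fderiv ℂ f z u‖ / Real.sqrt (bergmanH n z u) ≤ Qball n f z :=
  le_csSup (Qball_set_bddAbove hz hf) ⟨u, hu, rfl⟩

end Bookkeeping

theorem compOpNorm_eq_one_of_fixes_zero_ball' (n : ℕ)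
    (φ : EuclideanSpace ℂ (Fin n) → EuclideanSpace ℂ (Fin n))
    (hmap : MapsTo φ (ball (0 : EuclideanSpace ℂ (Fin n)) 1)
      (ball (0 : EuclideanSpace ℂ (Fin n)) 1))
    (hφ : DifferentiableOn ℂ φ (ball (0 : EuclideanSpace ℂ (Fin n)) 1))
    (h0 : φ 0 = 0) :
    compOpNormBall n φ = 1 ∧
    ∀ f : EuclideanSpace ℂ (Fin n) → ℂ, IsBlochBall n f →
      IsBlochBall n (f ∘ φ) ∧ blochNormBall n (f ∘ φ) ≤ blochNormBall n f := by
  have contract : ∀ f : EuclideanSpace ℂ (Fin n) → ℂ, IsBlochBall n f →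
      IsBlochBall n (f ∘ φ) ∧ blochNormBall n (f ∘ φ) ≤ blochNormBall n f := by
    intro f hf
    have hQ : ∀ z ∈ ball (0 : EuclideanSpace ℂ (Fin n)) 1,
        Qball n (f ∘ φ) z ≤ blochSemiBall n f := by
      intro z hzball
      have hz : ‖z‖ < 1 := mem_ball_zero_iff.1 hzball
      have hwball : φ z ∈ ball (0 : EuclideanSpace ℂ (Fin n)) 1 := hmap hzball
      have hw : ‖φ z‖ < 1 := mem_ball_zero_iff.1 hwball
      have hfw : DifferentiableAt ℂ f (φ z) :=
        hf.1.differentiableAt (isOpen_ball.mem_nhds hwball)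
      have hφz : DifferentiableAt ℂ φ z :=
        hφ.differentiableAt (isOpen_ball.mem_nhds hzball)
      have hQw : Qball n f (φ z) ≤ blochSemiBall n f :=
        le_csSup hf.2 ⟨φ z, hwball, rfl⟩
      rw [Qball]
      apply Real.sSup_le _ (blochSemiBall_nonneg f)
      rintro r ⟨u, hu, rfl⟩
      have hchain : fderiv ℂ (f ∘ φ) z = (fderiv ℂ f (φ z)).comp (fderiv ℂ φ z) :=
        fderiv_comp z hfw hφz
      rw [hchain]
      simp only [ContinuousLinearMap.comp_apply]
      by_cases hv0 : fderiv ℂ φ z u = 0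
      · rw [hv0]
        simpa using blochSemiBall_nonneg f
      · have hsp := schwarz_pick hmap hφ hz u
        have hpos : 0 < Real.sqrt (bergmanH n (φ z) (fderiv ℂ φ z u)) :=
          Real.sqrt_pos.2 (bergmanH_pos hw hv0)
        have h1 : ‖fderiv ℂ f (φ z) (fderiv ℂ φ z u)‖ / Real.sqrt (bergmanH n z u)
            ≤ ‖fderiv ℂ f (φ z) (fderiv ℂ φ z u)‖
              / Real.sqrt (bergmanH n (φ z) (fderiv ℂ φ z u)) :=
          div_le_div_of_nonneg_left (norm_nonneg _) hpos (Real.sqrt_le_sqrt hsp)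
        exact h1.trans ((Qball_le_of_mem hw hfw hv0).trans hQw)
    have hdiff : DifferentiableOn ℂ (f ∘ φ) (ball (0 : EuclideanSpace ℂ (Fin n)) 1) :=
      fun x hx =>
        ((hf.1.differentiableAt (isOpen_ball.mem_nhds (hmap hx))).comp x
          (hφ.differentiableAt (isOpen_ball.mem_nhds hx))).differentiableWithinAt
    have hbdd : BddAbove (blochValuesBall n (f ∘ φ)) :=
      ⟨blochSemiBall n f, by rintro r ⟨z, hz, rfl⟩; exact hQ z hz⟩
    have hsemi : blochSemiBall n (f ∘ φ) ≤ blochSemiBall n f := by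
      rw [blochSemiBall]
      apply Real.sSup_le _ (blochSemiBall_nonneg f)
      rintro r ⟨z, hz, rfl⟩
      exact hQ z hz
    refine ⟨⟨hdiff, hbdd⟩, ?_⟩
    rw [blochNormBall, blochNormBall, Function.comp_apply, h0]
    exact (add_le_add_iff_left _).2 hsemi
  refine ⟨?_, contract⟩
  have hub : ∀ r ∈ {r : ℝ | ∃ f : EuclideanSpace ℂ (Fin n) → ℂ,
      IsBlochBall n f ∧ blochNormBall n f ≤ 1 ∧ r = blochNormBall n (f ∘ φ)}, r ≤ 1 := by
    rintro r ⟨f, hfB, hf1, rfl⟩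
    exact ((contract f hfB).2).trans hf1
  have hconstQ : ∀ z : EuclideanSpace ℂ (Fin n),
      Qball n (fun _ => (1:ℂ)) z = 0 := by
    intro z
    apply le_antisymm _ (Qball_nonneg _ z)
    rw [Qball]
    apply Real.sSup_le _ le_rfl
    rintro r ⟨u, hu, rfl⟩
    simp
  have hsemi0 : blochSemiBall n (fun _ => (1:ℂ)) = 0 := by
    apply le_antisymm _ (blochSemiBall_nonneg _)
    rw [blochSemiBall]
    apply Real.sSup_le _ le_rfl
    rintro r ⟨z, hz, rfl⟩
    rw [hconstQ]
  have hconstB : IsBlochBall n (fun _ => (1:ℂ)) :=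
    ⟨(differentiable_const _).differentiableOn,
      ⟨0, by rintro r ⟨z, hz, rfl⟩; rw [hconstQ]⟩⟩
  have hnorm1 : blochNormBall n (fun _ => (1:ℂ)) = 1 := by
    rw [blochNormBall, hsemi0]; simp
  have hmem : (1:ℝ) ∈ {r : ℝ | ∃ f : EuclideanSpace ℂ (Fin n) → ℂ,
      IsBlochBall n f ∧ blochNormBall n f ≤ 1 ∧ r = blochNormBall n (f ∘ φ)} :=
    ⟨fun _ => (1:ℂ), hconstB, hnorm1.le, by
      rw [show ((fun _ => (1:ℂ)) ∘ φ) = (fun _ : EuclideanSpace ℂ (Fin n) => (1:ℂ)) from rfl,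
        hnorm1]⟩
  rw [compOpNormBall]
  exact le_antisymm (Real.sSup_le hub zero_le_one) (le_csSup ⟨1, hub⟩ hmem)

/-- If `φ` is a holomorphic self-map of `𝔹_n` with `φ(0) = 0`, then `‖C_φ‖ = 1`;
in particular `C_φ` is a contraction of the Bloch norm. -/
theorem compOpNorm_eq_one_of_fixes_zero_ball (n : ℕ)
    (φ : EuclideanSpace ℂ (Fin n) → EuclideanSpace ℂ (Fin n))
    (hmap : MapsTo φ (ball (0 : EuclideanSpace ℂ (Fin n)) 1)
      (ball (0 : EuclideanSpace ℂ (Fin n)) 1))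
    (hφ : DifferentiableOn ℂ φ (ball (0 : EuclideanSpace ℂ (Fin n)) 1))
    (h0 : φ 0 = 0) :
    compOpNormBall n φ = 1 ∧
    ∀ f : EuclideanSpace ℂ (Fin n) → ℂ, IsBlochBall n f →
      IsBlochBall n (f ∘ φ) ∧ blochNormBall n (f ∘ φ) ≤ blochNormBall n f := by
  exact compOpNorm_eq_one_of_fixes_zero_ball' n φ hmap hφ h0
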